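/- Let G be a finite simple undirected graph on vertex set V with Laplacian L(G), let F ⊆ V (the follower set) and let F̄ = V∖F (the leader set) be nonempty. Set A = L(G)_{F→F} (the principal submatrix of L(G) on rows and columns in F) and B = L(G)_{F→F̄} (rows in F, columns in F̄). Then the controllability matrix [B, AB, …, A^{|F|−1}B] has rank |F| if and only if every eigenvector y of L(G) satisfies y_{F̄} ≠ 0, i.e., there is no nonzero vector y ∈ ℝ^V and real λ with L(G)y = λy and y_v = 0 for all v ∈ F̄. -/

import Mathlib

open Matrix Polynomial

section Aux

variable {m p : Type*} [Fintype m] [Fintype p] [DecidableEq m]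

private lemma aux_vecMul_smul_mat (c : ℝ) (M : Matrix m p ℝ) (z : m → ℝ) :
    z ᵥ* (c • M) = c • (z ᵥ* M) := by
  ext e
  simp [Matrix.vecMul, dotProduct, Finset.mul_sum, mul_left_comm]

private lemma aux_vecMul_sum {ι : Type*} (s : Finset ι) (f : ι → Matrix m p ℝ) (z : m → ℝ) :
    z ᵥ* (∑ i ∈ s, f i) = ∑ i ∈ s, z ᵥ* f i := by
  induction s using Finset.cons_induction with
  | empty => simp
  | cons a s ha ih => simp [Matrix.vecMul_add, ih]

/-- Rank equals the number of rows iff the left kernel is trivial. -/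
private lemma aux_rank_iff (M : Matrix m p ℝ) :
    M.rank = Fintype.card m ↔ ∀ z : m → ℝ, z ᵥ* M = 0 → z = 0 := by
  rw [← Matrix.rank_transpose]
  have h := LinearMap.finrank_range_add_finrank_ker (Mᵀ.mulVecLin)
  have hdom : Module.finrank ℝ (m → ℝ) = Fintype.card m := Module.finrank_pi ℝ
  rw [hdom] at h
  have hiff : Mᵀ.rank = Fintype.card m ↔
      Module.finrank ℝ (LinearMap.ker Mᵀ.mulVecLin) = 0 := by
    unfold Matrix.rank
    omega
  rw [hiff, Submodule.finrank_eq_zero, LinearMap.ker_eq_bot']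
  constructor
  · intro hker z hz
    exact hker z (by rw [Matrix.mulVecLin_apply, Matrix.mulVec_transpose, hz])
  · intro hker z hz
    rw [Matrix.mulVecLin_apply, Matrix.mulVec_transpose] at hz
    exact hker z hz

/-- Cayley–Hamilton: vanishing of `z ᵥ* (A^k B)` for `k < card m` implies it for all `k`. -/
private lemma aux_pow (A : Matrix m m ℝ) (B : Matrix m p ℝ) (z : m → ℝ)
    (h : ∀ k : Fin (Fintype.card m), z ᵥ* (A ^ (k : ℕ) * B) = 0) (k : ℕ) :
    z ᵥ* (A ^ k * B) = 0 := by
  cases isEmpty_or_nonempty m with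
  | inl hm =>
    ext e
    simp [Matrix.vecMul, dotProduct]
  | inr hm =>
    have hcard : 0 < Fintype.card m := Fintype.card_pos
    rw [Matrix.pow_eq_aeval_mod_charpoly]
    have hne1 : A.charpoly ≠ 1 := by
      intro h1
      have h2 := A.charpoly_natDegree_eq_dim
      rw [h1, Polynomial.natDegree_one] at h2
      omega
    have hdeg : (X ^ k %ₘ A.charpoly).natDegree < Fintype.card m := by
      have h3 := Polynomial.natDegree_modByMonic_lt (X ^ k) A.charpoly_monic hne1
      rwa [A.charpoly_natDegree_eq_dim] at h3
    set q := X ^ k %ₘ A.charpoly with hq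
    rw [Polynomial.aeval_eq_sum_range, Matrix.sum_mul, aux_vecMul_sum]
    refine Finset.sum_eq_zero fun i hi => ?_
    have hilt : i < Fintype.card m := by
      have := Finset.mem_range.mp hi
      omega
    rw [Matrix.smul_mul, aux_vecMul_smul_mat, h ⟨i, hilt⟩, smul_zero]

end Aux

/-- **Controllability of a graph under a leader set (Kalman condition ↔ eigenvector test).**
`F` is the follower set, `Fᶜ` the (nonempty) leader set, `A = L(G)_{F→F}`,
`B = L(G)_{F→Fᶜ}`.  The controllability matrix `[B, AB, …, A^{|F|−1}B]` has rank `|F|`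
iff no eigenvector of the Laplacian vanishes identically on `Fᶜ`. -/
theorem stmt_1 {V : Type*} [Fintype V] [DecidableEq V] (G : SimpleGraph V) [DecidableRel G.Adj]
    (F : Finset V) (hF : (Fᶜ : Finset V).Nonempty)
    (A : Matrix F F ℝ) (B : Matrix F (↥(Fᶜ : Finset V)) ℝ)
    (hA : A = (G.lapMatrix ℝ).submatrix Subtype.val Subtype.val)
    (hB : B = (G.lapMatrix ℝ).submatrix Subtype.val Subtype.val) :
    (Matrix.of fun (i : F) (p : Fin F.card × ↥(Fᶜ : Finset V)) =>
        (A ^ (p.1 : ℕ) * B) i p.2).rank = F.card ↔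
      ¬ ∃ (y : V → ℝ) (l : ℝ), y ≠ 0 ∧ (G.lapMatrix ℝ) *ᵥ y = l • y ∧
          ∀ v ∈ (Fᶜ : Finset V), y v = 0 := by
  classical
  set L := G.lapMatrix ℝ with hL
  have hLsymm : Lᵀ = L := G.isSymm_lapMatrix (R := ℝ)
  have hLapp : ∀ v u : V, L v u = L u v := fun v u => by
    conv_lhs => rw [← hLsymm]
    rfl
  have hAt : Aᵀ = A := by
    rw [hA, Matrix.transpose_submatrix, hLsymm]
  have hcard : Fintype.card F = F.card := Fintype.card_coe F
  -- symmetry: left multiplication by A is right multiplication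
  have hvm : ∀ z : ↥F → ℝ, z ᵥ* A = A *ᵥ z := fun z => by
    rw [← hAt, Matrix.vecMul_transpose, hAt]
  -- eigenvectors are left eigenvectors of all powers
  have hpow : ∀ (z : ↥F → ℝ) (μ : ℝ), A *ᵥ z = μ • z →
      ∀ k : ℕ, z ᵥ* A ^ k = μ ^ k • z := by
    intro z μ hz k
    induction k with
    | zero => simp
    | succ k ih =>
      rw [pow_succ, ← Matrix.vecMul_vecMul, ih, Matrix.smul_vecMul, hvm, hz,
        smul_smul, pow_succ]
  -- splitting sums over V into F-part when the function vanishes off F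
  have hsplit : ∀ (f : V → ℝ), (∀ u ∈ (Fᶜ : Finset V), f u = 0) →
      ∀ g : V → ℝ, ∑ u, g u * f u = ∑ u : ↥F, g ↑u * f ↑u := by
    intro f hf g
    rw [Finset.sum_coe_sort F (fun u => g u * f u), ← Finset.sum_add_sum_compl F]
    have : ∑ u ∈ Fᶜ, g u * f u = 0 :=
      Finset.sum_eq_zero fun u hu => by rw [hf u hu, mul_zero]
    rw [this, add_zero]
  -- the bridge between eigen-pairs of A with `z ᵥ* B = 0` and eigenvectors of L vanishing on Fᶜ
  have hbridge : (∃ (z : ↥F → ℝ), z ≠ 0 ∧ ∃ μ : ℝ, A *ᵥ z = μ • z ∧ z ᵥ* B = 0) ↔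
      (∃ (y : V → ℝ) (l : ℝ), y ≠ 0 ∧ L *ᵥ y = l • y ∧ ∀ v ∈ (Fᶜ : Finset V), y v = 0) := by
    constructor
    · rintro ⟨z, hz0, μ, hzA, hzB⟩
      refine ⟨fun v => if h : v ∈ F then z ⟨v, h⟩ else 0, μ, ?_, ?_, ?_⟩
      · intro hy0
        apply hz0
        funext i
        have := congrFun hy0 (i : V)
        simpa [i.2] using this
      · funext v
        have hy0 : ∀ u ∈ (Fᶜ : Finset V), (fun v => if h : v ∈ F then z ⟨v, h⟩ else 0) u = 0 := by
          intro u hu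
          simp [Finset.mem_compl.mp hu]
        have hsum := hsplit _ hy0 (fun u => L v u)
        by_cases hv : v ∈ F
        · have h1 : (L *ᵥ fun v => if h : v ∈ F then z ⟨v, h⟩ else 0) v
              = (A *ᵥ z) ⟨v, hv⟩ := by
            rw [Matrix.mulVec, dotProduct, hsum, hA]
            refine Finset.sum_congr rfl fun u _ => ?_
            simp
          rw [h1, hzA]
          simp [hv]
        · have h1 : (L *ᵥ fun v => if h : v ∈ F then z ⟨v, h⟩ else 0) v
              = (z ᵥ* B) ⟨v, Finset.mem_compl.mpr hv⟩ := by
            rw [Matrix.mulVec, dotProduct, hsum, hB]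
            refine Finset.sum_congr rfl fun u _ => ?_
            simp [Matrix.vecMul, dotProduct, hLapp v u, mul_comm]
          rw [h1, hzB]
          simp [hv]
      · intro v hv
        simp [Finset.mem_compl.mp hv]
    · rintro ⟨y, l, hy0, hyL, hyv⟩
      refine ⟨fun i => y ↑i, ?_, l, ?_, ?_⟩
      · intro hz0
        apply hy0
        funext v
        by_cases hv : v ∈ F
        · exact congrFun hz0 ⟨v, hv⟩
        · exact hyv v (Finset.mem_compl.mpr hv)
      · funext i
        have h1 : (A *ᵥ fun i => y ↑i) i = (L *ᵥ y) ↑i := by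
          rw [Matrix.mulVec, Matrix.mulVec, dotProduct, dotProduct,
            hsplit y hyv (fun u => L ↑i u), hA]
          refine Finset.sum_congr rfl fun u _ => ?_
          simp
        rw [h1, hyL]
        simp
      · funext e
        have h1 : ((fun i : ↥F => y ↑i) ᵥ* B) e = (L *ᵥ y) ↑e := by
          rw [Matrix.vecMul, Matrix.mulVec, dotProduct, dotProduct,
            hsplit y hyv (fun u => L ↑e u), hB]
          refine Finset.sum_congr rfl fun u _ => ?_
          simp [hLapp (e : V) (u : V), mul_comm]
        rw [h1, hyL]
        simp [hyv ↑e e.2]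
  -- rank condition in terms of the left kernel
  have hrank : (Matrix.of fun (i : F) (p : Fin F.card × ↥(Fᶜ : Finset V)) =>
        (A ^ (p.1 : ℕ) * B) i p.2).rank = F.card ↔
      ∀ z : ↥F → ℝ, (∀ k : Fin F.card, z ᵥ* (A ^ (k : ℕ) * B) = 0) → z = 0 := by
    rw [← hcard, aux_rank_iff]
    constructor
    · intro h z hz
      refine h z ?_
      funext p
      have := congrFun (hz p.1) p.2
      simpa [Matrix.vecMul, dotProduct] using this
    · intro h z hz
      refine h z fun k => ?_
      funext e
      have := congrFun hz (k, e)
      simpa [Matrix.vecMul, dotProduct] using this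
  rw [hrank, ← hbridge]
  constructor
  · intro h
    rintro ⟨z, hz0, μ, hzA, hzB⟩
    apply hz0
    refine h z fun k => ?_
    rw [← Matrix.vecMul_vecMul, hpow z μ hzA k, Matrix.smul_vecMul, hzB, smul_zero]
  · intro h z hz
    by_contra hz0
    -- spectral argument: the common left kernel is A-invariant, hence contains an eigenvector
    have hzall : ∀ k : ℕ, z ᵥ* (A ^ k * B) = 0 := by
      intro k
      refine aux_pow A B z (fun k' => ?_) k
      exact hz ⟨k', by omega⟩
    -- work in Euclidean space
    have hAH : A.IsHermitian := by
      rw [Matrix.IsHermitian, Matrix.conjTranspose_eq_transpose_of_trivial, hAt]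
    have hTsym : (Matrix.toEuclideanLin A).IsSymmetric :=
      Matrix.isHermitian_iff_isSymmetric.mp hAH
    set T := Matrix.toEuclideanLin A with hT
    set W : Submodule ℝ (EuclideanSpace ℝ ↥F) :=
      Submodule.comap (WithLp.linearEquiv 2 ℝ (↥F → ℝ) : _ →ₗ[ℝ] (↥F → ℝ))
        (⨅ k : ℕ, LinearMap.ker ((A ^ k * B)ᵀ.mulVecLin)) with hW
    have hmemW : ∀ w : EuclideanSpace ℝ ↥F,
        w ∈ W ↔ ∀ k : ℕ, (WithLp.equiv 2 (↥F → ℝ) w) ᵥ* (A ^ k * B) = 0 := by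
      intro w
      rw [hW, Submodule.mem_comap, Submodule.mem_iInf]
      refine forall_congr' fun k => ?_
      rw [LinearMap.mem_ker, Matrix.mulVecLin_apply, Matrix.mulVec_transpose]
      rfl
    have hinv : ∀ w ∈ W, T w ∈ W := by
      intro w hw
      rw [hmemW] at hw ⊢
      intro k
      have h1 : WithLp.equiv 2 (↥F → ℝ) (T w) = A *ᵥ (WithLp.equiv 2 (↥F → ℝ) w) := rfl
      rw [h1, ← hvm, Matrix.vecMul_vecMul, ← Matrix.mul_assoc, ← pow_succ']
      exact hw (k + 1)
    have hzW : (WithLp.equiv 2 (↥F → ℝ)).symm z ∈ W := by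
      rw [hmemW]
      intro k
      simpa using hzall k
    have hWne : W ≠ ⊥ := by
      intro hbot
      rw [hbot, Submodule.mem_bot] at hzW
      apply hz0
      have := congrArg (WithLp.equiv 2 (↥F → ℝ)) hzW
      simpa using this
    have hd : 0 < Module.finrank ℝ ↥W := by
      rcases Nat.eq_zero_or_pos (Module.finrank ℝ ↥W) with h0 | h0
      · exact absurd (Submodule.finrank_eq_zero.mp h0) hWne
      · exact h0
    set Tr := T.restrict hinv with hTr
    have hTrsym : Tr.IsSymmetric := hTsym.restrict_invariant hinv
    obtain ⟨hwmem, hwne⟩ :=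
      (hTrsym.hasEigenvector_eigenvectorBasis rfl ⟨0, hd⟩)
    have hweig : Tr (hTrsym.eigenvectorBasis rfl ⟨0, hd⟩) =
        hTrsym.eigenvalues rfl ⟨0, hd⟩ • (hTrsym.eigenvectorBasis rfl ⟨0, hd⟩) := by
      rwa [Module.End.mem_eigenspace_iff] at hwmem
    set μ := hTrsym.eigenvalues rfl ⟨0, hd⟩ with hμ
    set wv : ↥W := hTrsym.eigenvectorBasis rfl ⟨0, hd⟩ with hwv
    -- pass to the ambient space
    have hambient : T ↑wv = μ • (↑wv : EuclideanSpace ℝ ↥F) := by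
      have := congrArg (Subtype.val) hweig
      rwa [LinearMap.restrict_coe_apply] at this
    set z' : ↥F → ℝ := WithLp.equiv 2 (↥F → ℝ) ↑wv with hz'
    have hz'0 : z' ≠ 0 := by
      intro h0
      apply hwne
      have : (↑wv : EuclideanSpace ℝ ↥F) = 0 := by
        have := congrArg (WithLp.equiv 2 (↥F → ℝ)).symm h0
        simpa [hz'] using this
      exact Subtype.coe_injective (by simpa using this)
    have hz'A : A *ᵥ z' = μ • z' := by
      have := congrArg (WithLp.equiv 2 (↥F → ℝ)) hambient
      simpa [hz', hT, Matrix.ofLp_toEuclideanLin_apply] using this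
    have hz'B : z' ᵥ* B = 0 := by
      have := (hmemW ↑wv).mp wv.2 0
      simpa [hz'] using this
    exact h ⟨z', hz'0, μ, hz'A, hz'B⟩
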